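/- arXiv:2111.01601 — 3 statements merged into one kernel-verified Lean document; each statement's English description precedes it below -/
import Mathlib

section
/- For any positive integer $n$ and any real number $y \geq 1$, the indicator function of $y$-smooth numbers satisfies the Buchstab-type identity: $\mathbb{1}_{P^+(n) \leq y} = 1 + \sum_{j=1}^{3} (-1)^j \sum_{p_1 \cdots p_j \mid n,\ y < p_1 < \cdots < p_j} 1 + \sum_{p_1 \cdots p_4 \mid n,\ y < p_1 < \cdots < p_4} \mathbb{1}_{P^+(n/(p_1 p_2 p_3 p_4)) \leq p_4}$, where the sums run over primes $p_1, \ldots, p_j$ with the stated divisibility and ordering conditions. -/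
/-- The largest prime factor of `n`, with the convention `P⁺(1) = 1`. -/
def Pplus (n : ℕ) : ℕ := if n ≤ 1 then 1 else n.primeFactors.sup id

/-- The prime divisors of `n` exceeding `y`. -/
noncomputable def bigPrimes (n : ℕ) (y : ℝ) : Finset ℕ :=
  n.divisors.filter (fun p : ℕ => p.Prime ∧ y < (p : ℝ))

lemma Pplus_le_iff {m k : ℕ} (hk : 1 ≤ k) :
    Pplus m ≤ k ↔ ∀ q ∈ m.primeFactors, q ≤ k := by
  unfold Pplus
  split_ifs with h
  · have hm : m.primeFactors = ∅ := by interval_cases m <;> simp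
    simp [hm, hk]
  · rw [Finset.sup_le_iff]
    simp

/-- The iterated Buchstab identity: for a positive integer `n` and real `y ≥ 1`,
`𝟙_{P⁺(n) ≤ y} = 1 + ∑_{j=1}^{3} (-1)^j ∑_{p₁⋯p_j ∣ n, y < p₁ < ⋯ < p_j} 1
 + ∑_{p₁⋯p₄ ∣ n, y < p₁ < ⋯ < p₄} 𝟙_{P⁺(n/(p₁p₂p₃p₄)) ≤ p₄}`. -/
theorem stmt5 (n : ℕ) (hn : 0 < n) (y : ℝ) (hy : 1 ≤ y) :
    (if (Pplus n : ℝ) ≤ y then (1 : ℤ) else 0)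
      = 1
        - (∑ p₁ ∈ bigPrimes n y, 1)
        + (∑ p₁ ∈ bigPrimes n y, ∑ p₂ ∈ (bigPrimes n y).filter (p₁ < ·), 1)
        - (∑ p₁ ∈ bigPrimes n y, ∑ p₂ ∈ (bigPrimes n y).filter (p₁ < ·),
            ∑ p₃ ∈ (bigPrimes n y).filter (p₂ < ·), 1)
        + (∑ p₁ ∈ bigPrimes n y, ∑ p₂ ∈ (bigPrimes n y).filter (p₁ < ·),
            ∑ p₃ ∈ (bigPrimes n y).filter (p₂ < ·),
              ∑ p₄ ∈ (bigPrimes n y).filter (p₃ < ·),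
                (if Pplus (n / (p₁ * p₂ * p₃ * p₄)) ≤ p₄ then (1 : ℤ) else 0)) := by
  classical
  set S := bigPrimes n y with hSdef
  have hmem : ∀ q, q ∈ S ↔ q.Prime ∧ q ∣ n ∧ y < (q : ℝ) := by
    intro q
    simp [hSdef, bigPrimes, Nat.mem_divisors, hn.ne', and_assoc]
    tauto
  rcases S.eq_empty_or_nonempty with hS | hS
  · -- all prime factors of n are ≤ y
    have hle : (Pplus n : ℝ) ≤ y := by
      by_cases h1 : n ≤ 1
      · simp only [Pplus, if_pos h1]
        exact_mod_cast hy
      · unfold Pplus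
        rw [if_neg h1]
        have hne : n.primeFactors.Nonempty :=
          Nat.nonempty_primeFactors.mpr (by omega)
        obtain ⟨q, hq, hqe⟩ := Finset.exists_mem_eq_sup _ hne id
        rw [hqe]
        by_contra h
        push_neg at h
        have : q ∈ S := (hmem q).mpr
          ⟨Nat.prime_of_mem_primeFactors hq, Nat.dvd_of_mem_primeFactors hq, h⟩
        simp [hS] at this
    rw [hS]
    simp [hle]
  · set M := S.max' hS with hMdef
    have hMS : M ∈ S := S.max'_mem hS
    obtain ⟨hMp, hMd, hMy⟩ := (hmem M).1 hMS
    set S' := S.erase M with hS'def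
    -- the left indicator is 0
    have hgt : ¬ ((Pplus n : ℝ) ≤ y) := by
      have h1 : ¬ n ≤ 1 := by
        have := Nat.le_of_dvd hn hMd
        have := hMp.two_le
        omega
      have hMf : M ∈ n.primeFactors := Nat.mem_primeFactors.mpr ⟨hMp, hMd, hn.ne'⟩
      have : M ≤ Pplus n := by
        unfold Pplus; rw [if_neg h1]
        exact Finset.le_sup (f := id) hMf
      push_neg
      calc y < (M : ℝ) := hMy
        _ ≤ (Pplus n : ℝ) := by exact_mod_cast this
    rw [if_neg hgt]
    -- splitting lemmas
    have hf0 : S.filter (M < ·) = ∅ := by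
      apply Finset.filter_eq_empty_iff.mpr
      intro q hq
      exact not_lt.mpr (S.le_max' q hq)
    have hsplitS : ∀ f : ℕ → ℤ, ∑ p ∈ S, f p = f M + ∑ p ∈ S', f p :=
      fun f => (Finset.add_sum_erase S f hMS).symm
    have hsplitF : ∀ a ∈ S', ∀ f : ℕ → ℤ,
        ∑ p ∈ S.filter (a < ·), f p = f M + ∑ p ∈ S'.filter (a < ·), f p := by
      intro a ha f
      have haM : a < M :=
        lt_of_le_of_ne (S.le_max' a (Finset.mem_of_mem_erase ha))
          (Finset.ne_of_mem_erase ha)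
      have hins : S.filter (a < ·) = insert M (S'.filter (a < ·)) := by
        ext q
        simp only [Finset.mem_filter, Finset.mem_insert, hS'def, Finset.mem_erase]
        constructor
        · rintro ⟨hq, haq⟩
          by_cases hqM : q = M
          · exact Or.inl hqM
          · exact Or.inr ⟨⟨hqM, hq⟩, haq⟩
        · rintro (rfl | ⟨⟨_, hq⟩, haq⟩)
          · exact ⟨hMS, haM⟩
          · exact ⟨hq, haq⟩
      rw [hins, Finset.sum_insert (by simp [hS'def])]
    -- the indicator in the last sum
    have hind : ∀ p₁ ∈ S, ∀ p₂ ∈ S.filter (p₁ < ·), ∀ p₃ ∈ S.filter (p₂ < ·),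
        ∀ p₄ ∈ S.filter (p₃ < ·),
        ((if Pplus (n / (p₁ * p₂ * p₃ * p₄)) ≤ p₄ then (1 : ℤ) else 0)
          = if p₄ = M then 1 else 0) := by
      intro p₁ h1 p₂ h2 p₃ h3 p₄ h4
      obtain ⟨h2S, h12⟩ := Finset.mem_filter.1 h2
      obtain ⟨h3S, h23⟩ := Finset.mem_filter.1 h3
      obtain ⟨h4S, h34⟩ := Finset.mem_filter.1 h4
      obtain ⟨hp1, hd1, hy1⟩ := (hmem p₁).1 h1
      obtain ⟨hp2, hd2, hy2⟩ := (hmem p₂).1 h2S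
      obtain ⟨hp3, hd3, hy3⟩ := (hmem p₃).1 h3S
      obtain ⟨hp4, hd4, hy4⟩ := (hmem p₄).1 h4S
      have hP : p₁ * p₂ * p₃ * p₄ ∣ n := by
        have c12 : Nat.Coprime p₁ p₂ := (Nat.coprime_primes hp1 hp2).2 h12.ne
        have c13 : Nat.Coprime p₁ p₃ := (Nat.coprime_primes hp1 hp3).2 (by omega)
        have c23 : Nat.Coprime p₂ p₃ := (Nat.coprime_primes hp2 hp3).2 h23.ne
        have c14 : Nat.Coprime p₁ p₄ := (Nat.coprime_primes hp1 hp4).2 (by omega)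
        have c24 : Nat.Coprime p₂ p₄ := (Nat.coprime_primes hp2 hp4).2 (by omega)
        have c34 : Nat.Coprime p₃ p₄ := (Nat.coprime_primes hp3 hp4).2 h34.ne
        have d12 : p₁ * p₂ ∣ n := c12.mul_dvd_of_dvd_of_dvd hd1 hd2
        have d123 : p₁ * p₂ * p₃ ∣ n :=
          (Nat.Coprime.mul c13 c23).mul_dvd_of_dvd_of_dvd d12 hd3
        exact (Nat.Coprime.mul (Nat.Coprime.mul c14 c24) c34).mul_dvd_of_dvd_of_dvd
          d123 hd4
      set m := n / (p₁ * p₂ * p₃ * p₄) with hm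
      have hmn : m * (p₁ * p₂ * p₃ * p₄) = n := Nat.div_mul_cancel hP
      have hm0 : m ≠ 0 := by
        intro h; rw [h, zero_mul] at hmn; omega
      have key : Pplus m ≤ p₄ ↔ p₄ = M := by
        rw [Pplus_le_iff hp4.one_lt.le]
        constructor
        · intro h
          refine le_antisymm (S.le_max' _ h4S) ?_
          by_contra hMp4
          push_neg at hMp4
          have hMne : ∀ p, p.Prime → p ≤ p₄ → ¬ M ∣ p := by
            intro p hp hple hdvd
            have := (Nat.prime_dvd_prime_iff_eq hMp hp).1 hdvd
            omega
          have hMP : ¬ M ∣ p₁ * p₂ * p₃ * p₄ := by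
            intro hdvd
            rcases (hMp.dvd_mul.1 hdvd) with hd | hd
            · rcases (hMp.dvd_mul.1 hd) with hd' | hd'
              · rcases (hMp.dvd_mul.1 hd') with hd'' | hd''
                · exact hMne p₁ hp1 (by omega) hd''
                · exact hMne p₂ hp2 (by omega) hd''
              · exact hMne p₃ hp3 (by omega) hd'
            · exact hMne p₄ hp4 le_rfl hd
          have hcop : Nat.Coprime M (p₁ * p₂ * p₃ * p₄) :=
            (Nat.Prime.coprime_iff_not_dvd hMp).2 hMP
          have hMm : M ∣ m := by
            have : M ∣ m * (p₁ * p₂ * p₃ * p₄) := hmn ▸ hMd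
            exact (Nat.Coprime.dvd_of_dvd_mul_right hcop) this
          have := h M (Nat.mem_primeFactors.mpr ⟨hMp, hMm, hm0⟩)
          omega
        · rintro rfl
          intro q hq
          obtain ⟨hqp, hqm, _⟩ := Nat.mem_primeFactors.1 hq
          have hqn : q ∣ n := hqm.trans (Nat.div_dvd_of_dvd hP)
          by_contra hqle
          push_neg at hqle
          have : q ∈ S := (hmem q).mpr ⟨hqp, hqn, by
            have hMq : (M : ℝ) < q := by exact_mod_cast hqle
            linarith⟩
          exact absurd (S.le_max' q this) (by omega)
      by_cases h : p₄ = M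
      · rw [if_pos h, if_pos (key.2 h)]
      · rw [if_neg h, if_neg (fun hc => h (key.1 hc))]
    -- rewrite the last quadruple sum
    have e4 : (∑ p₁ ∈ S, ∑ p₂ ∈ S.filter (p₁ < ·), ∑ p₃ ∈ S.filter (p₂ < ·),
          ∑ p₄ ∈ S.filter (p₃ < ·),
            (if Pplus (n / (p₁ * p₂ * p₃ * p₄)) ≤ p₄ then (1 : ℤ) else 0))
        = ∑ p₁ ∈ S', ∑ p₂ ∈ S'.filter (p₁ < ·), ∑ p₃ ∈ S'.filter (p₂ < ·), (1 : ℤ) := by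
      rw [Finset.sum_congr rfl (fun p₁ h1 => Finset.sum_congr rfl
        (fun p₂ h2 => Finset.sum_congr rfl (fun p₃ h3 => Finset.sum_congr rfl
        (fun p₄ h4 => hind p₁ h1 p₂ h2 p₃ h3 p₄ h4))))]
      rw [hsplitS (fun p₁ => ∑ p₂ ∈ S.filter (p₁ < ·), ∑ p₃ ∈ S.filter (p₂ < ·),
          ∑ p₄ ∈ S.filter (p₃ < ·), if p₄ = M then (1:ℤ) else 0)]
      rw [hf0]
      simp only [Finset.sum_empty, zero_add]
      refine Finset.sum_congr rfl fun p₁ h1 => ?_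
      rw [hsplitF p₁ h1 (fun p₂ => ∑ p₃ ∈ S.filter (p₂ < ·),
          ∑ p₄ ∈ S.filter (p₃ < ·), if p₄ = M then (1:ℤ) else 0)]
      rw [hf0]
      simp only [Finset.sum_empty, zero_add]
      refine Finset.sum_congr rfl fun p₂ h2 => ?_
      rw [hsplitF p₂ (Finset.mem_of_mem_filter p₂ h2) (fun p₃ =>
          ∑ p₄ ∈ S.filter (p₃ < ·), if p₄ = M then (1:ℤ) else 0)]
      rw [hf0]
      simp only [Finset.sum_empty, zero_add]
      refine Finset.sum_congr rfl fun p₃ h3 => ?_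
      rw [hsplitF p₃ (Finset.mem_of_mem_filter p₃ h3) (fun p₄ =>
          if p₄ = M then (1:ℤ) else 0)]
      rw [if_pos rfl]
      have : ∀ p₄ ∈ S'.filter (p₃ < ·), (if p₄ = M then (1:ℤ) else 0) = 0 := by
        intro p₄ h4
        have := Finset.ne_of_mem_erase (Finset.mem_of_mem_filter p₄ h4)
        simp [this]
      rw [Finset.sum_congr rfl this]
      simp
    have e3 : (∑ p₁ ∈ S, ∑ p₂ ∈ S.filter (p₁ < ·),
          ∑ p₃ ∈ S.filter (p₂ < ·), (1 : ℤ))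
        = (∑ p₁ ∈ S', ∑ p₂ ∈ S'.filter (p₁ < ·), (1:ℤ))
          + ∑ p₁ ∈ S', ∑ p₂ ∈ S'.filter (p₁ < ·), ∑ p₃ ∈ S'.filter (p₂ < ·), (1:ℤ) := by
      rw [hsplitS (fun p₁ => ∑ p₂ ∈ S.filter (p₁ < ·),
          ∑ p₃ ∈ S.filter (p₂ < ·), (1:ℤ))]
      rw [hf0]
      simp only [Finset.sum_empty, zero_add]
      rw [← Finset.sum_add_distrib]
      refine Finset.sum_congr rfl fun p₁ h1 => ?_
      rw [hsplitF p₁ h1 (fun p₂ => ∑ p₃ ∈ S.filter (p₂ < ·), (1:ℤ))]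
      rw [hf0]
      simp only [Finset.sum_empty, zero_add]
      rw [← Finset.sum_add_distrib]
      refine Finset.sum_congr rfl fun p₂ h2 => ?_
      rw [hsplitF p₂ (Finset.mem_of_mem_filter p₂ h2) (fun _ => (1:ℤ))]
    have e2 : (∑ p₁ ∈ S, ∑ p₂ ∈ S.filter (p₁ < ·), (1 : ℤ))
        = (∑ p₁ ∈ S', (1:ℤ)) + ∑ p₁ ∈ S', ∑ p₂ ∈ S'.filter (p₁ < ·), (1:ℤ) := by
      rw [hsplitS (fun p₁ => ∑ p₂ ∈ S.filter (p₁ < ·), (1:ℤ))]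
      rw [hf0]
      simp only [Finset.sum_empty, zero_add]
      rw [← Finset.sum_add_distrib]
      refine Finset.sum_congr rfl fun p₁ h1 => ?_
      rw [hsplitF p₁ h1 (fun _ => (1:ℤ))]
    have e1 : (∑ p₁ ∈ S, (1 : ℤ)) = 1 + ∑ p₁ ∈ S', (1:ℤ) :=
      hsplitS (fun _ => (1:ℤ))
    rw [e1, e2, e3, e4]
    ring
end

section
/- Let $d' \geq 1$ be a squarefree odd integer, and for each prime $p \mid d'$ let $\chi_{p^*}$ denote the real primitive character mod $p$ (the Legendre symbol). Let $n, m$ be integers. Then $\prod_{p \mid d'} 2 \cdot \sum_{w \bmod d',\ (w,d')=1,\ \chi_{p^*}(w) = 1\ \forall p \mid d',\ (n - w, d') = (m, d')} \frac{1}{\phi(d'/(n-w, d'))} = \mathbb{1}_{(d', m, n) = 1} \prod_{p \mid d',\ p \mid mn}(1 + \chi_{p^*}(n)) \prod_{p \mid d',\ p \nmid mn}\left(1 - \frac{1 + \chi_{p^*}(n)}{p-1}\right)$. -/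
open Finset

section helpers
lemma int_gcd_of_dvd {a d : ℕ} (z : ℤ) (had : a ∣ d) :
    Int.gcd z a = Nat.gcd (Int.gcd z d) a := by
  unfold Int.gcd
  simp only [Int.natAbs_natCast]
  rw [Nat.gcd_assoc, Nat.gcd_eq_right had]

lemma int_gcd_congr {d : ℕ} {z z' : ℤ} (h : (d : ℤ) ∣ z - z') : Int.gcd z d = Int.gcd z' d := by
  apply Nat.dvd_antisymm
  · rw [← Int.natCast_dvd_natCast]
    refine Int.dvd_coe_gcd ?_ (Int.gcd_dvd_right _ _)
    have : z' = z - (z - z') := by ring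
    rw [this]; exact dvd_sub (Int.gcd_dvd_left _ _) ((Int.gcd_dvd_right _ _).trans h)
  · rw [← Int.natCast_dvd_natCast]
    refine Int.dvd_coe_gcd ?_ (Int.gcd_dvd_right _ _)
    have : z = z' + (z - z') := by ring
    rw [this]; exact dvd_add (Int.gcd_dvd_left _ _) ((Int.gcd_dvd_right _ _).trans h)

lemma jacobi_congr {p : ℕ} {z z' : ℤ} (h : (p : ℤ) ∣ z - z') : jacobiSym z p = jacobiSym z' p :=
  jacobiSym.mod_left' ((Int.modEq_iff_dvd.mpr h).symm)
end helpers

noncomputable def Fd (n m : ℤ) (d : ℕ) (w : ℕ) : ℚ :=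
  if Nat.Coprime w d ∧ (∀ p ∈ d.primeFactors, jacobiSym (w : ℤ) p = 1) ∧
      Int.gcd (n - (w : ℤ)) d = Int.gcd m d
  then (1 : ℚ) / (Nat.totient (d / Int.gcd (n - (w : ℤ)) d) : ℚ) else 0

lemma dvd_sub_mod_int (d w : ℕ) : (d : ℤ) ∣ (w : ℤ) - ((w % d : ℕ) : ℤ) := by
  push_cast
  exact Int.dvd_self_sub_of_emod_eq rfl

lemma Fd_mod (n m : ℤ) (d : ℕ) (w : ℕ) : Fd n m d (w % d) = Fd n m d w := by
  unfold Fd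
  have hco : Nat.Coprime (w % d) d ↔ Nat.Coprime w d := by
    have h : Nat.gcd (w % d) d = Nat.gcd w d := by rw [← Nat.gcd_rec, Nat.gcd_comm]
    unfold Nat.Coprime
    rw [h]
  have hgcd : Int.gcd (n - ((w % d : ℕ) : ℤ)) d = Int.gcd (n - (w : ℤ)) d := by
    apply int_gcd_congr
    have := dvd_sub_mod_int d w
    have h : (n - ((w % d : ℕ) : ℤ)) - (n - (w : ℤ)) = (w : ℤ) - ((w % d : ℕ) : ℤ) := by ring
    rw [h]; exact this
  have hjac : ∀ p ∈ d.primeFactors,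
      jacobiSym ((w % d : ℕ) : ℤ) p = jacobiSym (w : ℤ) p := by
    intro p hp
    apply jacobi_congr
    have hpd : (p : ℤ) ∣ (d : ℤ) := Int.natCast_dvd_natCast.mpr (Nat.dvd_of_mem_primeFactors hp)
    have h2 := dvd_neg.mpr (hpd.trans (dvd_sub_mod_int d w))
    rwa [neg_sub] at h2
  rw [hgcd]
  congr 1
  rw [eq_iff_iff]
  constructor
  · rintro ⟨h1, h2, h3⟩
    exact ⟨hco.mp h1, fun p hp => (hjac p hp) ▸ h2 p hp, h3⟩
  · rintro ⟨h1, h2, h3⟩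
    exact ⟨hco.mpr h1, fun p hp => (hjac p hp).symm ▸ h2 p hp, h3⟩

lemma int_gcd_dvd_nat {z : ℤ} {a : ℕ} : Int.gcd z a ∣ a := by
  rw [← Int.natCast_dvd_natCast]
  exact Int.gcd_dvd_right _ _

lemma nat_gcd_mul_of_coprime' {a b : ℕ} (x : ℕ) (h : Nat.Coprime a b) :
    Nat.gcd x (a * b) = Nat.gcd x a * Nat.gcd x b := by
  apply Nat.dvd_antisymm
  · obtain ⟨d₁, d₂, hd₁, hd₂, hc⟩ := exists_dvd_and_dvd_of_dvd_mul (Nat.gcd_dvd_right x (a*b))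
    rw [hc]
    exact Nat.mul_dvd_mul
      (Nat.dvd_gcd ((dvd_mul_right d₁ d₂).trans (hc ▸ Nat.gcd_dvd_left x (a*b))) hd₁)
      (Nat.dvd_gcd ((dvd_mul_left d₂ d₁).trans (hc ▸ Nat.gcd_dvd_left x (a*b))) hd₂)
  · refine Nat.dvd_gcd ?_ (Nat.mul_dvd_mul (Nat.gcd_dvd_right x a) (Nat.gcd_dvd_right x b))
    exact Nat.Coprime.mul_dvd_of_dvd_of_dvd
      (Nat.Coprime.coprime_dvd_left (Nat.gcd_dvd_right x a)
        (Nat.Coprime.coprime_dvd_right (Nat.gcd_dvd_right x b) h))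
      (Nat.gcd_dvd_left x a) (Nat.gcd_dvd_left x b)

lemma int_gcd_mul_of_coprime' {a b : ℕ} (z : ℤ) (h : Nat.Coprime a b) :
    Int.gcd z ((a * b : ℕ) : ℤ) = Int.gcd z a * Int.gcd z b := by
  unfold Int.gcd
  simp only [Int.natAbs_natCast]
  exact nat_gcd_mul_of_coprime' _ h

lemma Fd_mul (n m : ℤ) {a b : ℕ} (ha : 0 < a) (hb : 0 < b) (hab : Nat.Coprime a b) (w : ℕ) :
    Fd n m (a * b) w = Fd n m a w * Fd n m b w := by
  have hpf : (a * b).primeFactors = a.primeFactors ∪ b.primeFactors :=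
    Nat.primeFactors_mul ha.ne' hb.ne'
  have hg : Int.gcd (n - (w : ℤ)) (a * b : ℕ) = Int.gcd (n - (w : ℤ)) a * Int.gcd (n - (w : ℤ)) b :=
    int_gcd_mul_of_coprime' _ hab
  have hgm : Int.gcd m (a * b : ℕ) = Int.gcd m a * Int.gcd m b := int_gcd_mul_of_coprime' _ hab
  have hcond : (Nat.Coprime w (a * b) ∧ (∀ p ∈ (a*b).primeFactors, jacobiSym (w : ℤ) p = 1) ∧
      Int.gcd (n - (w : ℤ)) ((a*b : ℕ) : ℤ) = Int.gcd m ((a*b : ℕ) : ℤ)) ↔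
      ((Nat.Coprime w a ∧ (∀ p ∈ a.primeFactors, jacobiSym (w : ℤ) p = 1) ∧
        Int.gcd (n - (w : ℤ)) a = Int.gcd m a) ∧
       (Nat.Coprime w b ∧ (∀ p ∈ b.primeFactors, jacobiSym (w : ℤ) p = 1) ∧
        Int.gcd (n - (w : ℤ)) b = Int.gcd m b)) := by
    constructor
    · rintro ⟨h1, h2, h3⟩
      rw [Nat.coprime_mul_iff_right] at h1
      have hja : ∀ p ∈ a.primeFactors, jacobiSym (w : ℤ) p = 1 := fun p hp =>
        h2 p (hpf ▸ Finset.mem_union_left _ hp)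
      have hjb : ∀ p ∈ b.primeFactors, jacobiSym (w : ℤ) p = 1 := fun p hp =>
        h2 p (hpf ▸ Finset.mem_union_right _ hp)
      have hga : Int.gcd (n - (w : ℤ)) a = Int.gcd m a := by
        rw [int_gcd_of_dvd (n - (w:ℤ)) (dvd_mul_right a b), int_gcd_of_dvd m (dvd_mul_right a b), h3]
      have hgb : Int.gcd (n - (w : ℤ)) b = Int.gcd m b := by
        rw [int_gcd_of_dvd (n - (w:ℤ)) (dvd_mul_left b a), int_gcd_of_dvd m (dvd_mul_left b a), h3]
      exact ⟨⟨h1.1, hja, hga⟩, ⟨h1.2, hjb, hgb⟩⟩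
    · rintro ⟨⟨h1a, h2a, h3a⟩, ⟨h1b, h2b, h3b⟩⟩
      refine ⟨Nat.coprime_mul_iff_right.mpr ⟨h1a, h1b⟩, ?_, by rw [hg, hgm, h3a, h3b]⟩
      intro p hp
      rw [hpf, Finset.mem_union] at hp
      rcases hp with hp | hp
      · exact h2a p hp
      · exact h2b p hp
  by_cases hC : Nat.Coprime w (a * b) ∧ (∀ p ∈ (a*b).primeFactors, jacobiSym (w : ℤ) p = 1) ∧
      Int.gcd (n - (w : ℤ)) ((a*b : ℕ) : ℤ) = Int.gcd m ((a*b : ℕ) : ℤ)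
  · have hAB := hcond.mp hC
    unfold Fd
    rw [if_pos hC, if_pos hAB.1, if_pos hAB.2]
    have hdvd_a : Int.gcd (n - (w : ℤ)) a ∣ a := int_gcd_dvd_nat
    have hdvd_b : Int.gcd (n - (w : ℤ)) b ∣ b := int_gcd_dvd_nat
    have hdiv : a * b / Int.gcd (n - (w : ℤ)) ((a*b : ℕ) : ℤ)
        = (a / Int.gcd (n - (w : ℤ)) a) * (b / Int.gcd (n - (w : ℤ)) b) := by
      rw [hg, Nat.div_mul_div_comm hdvd_a hdvd_b]
    have hcop : Nat.Coprime (a / Int.gcd (n - (w : ℤ)) a) (b / Int.gcd (n - (w : ℤ)) b) :=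
      Nat.Coprime.coprime_dvd_left (Nat.div_dvd_of_dvd hdvd_a)
        (Nat.Coprime.coprime_dvd_right (Nat.div_dvd_of_dvd hdvd_b) hab)
    rw [hdiv, Nat.totient_mul hcop]
    push_cast
    rw [one_div, mul_inv, one_div, one_div]
  · unfold Fd
    rw [if_neg hC]
    rcases not_and_or.mp (fun h => hC (hcond.mpr h)) with h | h
    · rw [if_neg h, zero_mul]
    · rw [if_neg h, mul_zero]

lemma sum_crt' {a b : ℕ} (ha : 0 < a) (hb : 0 < b) (h : Nat.Coprime a b) (f g : ℕ → ℚ) :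
    ∑ w ∈ range (a * b), f (w % a) * g (w % b)
      = (∑ u ∈ range a, f u) * (∑ v ∈ range b, g v) := by
  rw [Finset.sum_mul_sum, ← Finset.sum_product']
  refine Finset.sum_nbij' (fun w => (w % a, w % b))
    (fun uv => (Nat.chineseRemainder h uv.1 uv.2 : ℕ) % (a * b)) ?_ ?_ ?_ ?_ ?_
  · intro w hw
    simp only [Finset.mem_product, Finset.mem_range]
    exact ⟨Nat.mod_lt _ ha, Nat.mod_lt _ hb⟩
  · intro uv huv
    simp only [Finset.mem_range]
    exact Nat.mod_lt _ (Nat.mul_pos ha hb)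
  · intro w hw
    simp only [Finset.mem_range] at hw
    have hcrt := (Nat.chineseRemainder h (w % a) (w % b)).2
    have h1 : (Nat.chineseRemainder h (w % a) (w % b) : ℕ) ≡ w [MOD a] :=
      hcrt.1.trans (Nat.mod_modEq w a)
    have h2 : (Nat.chineseRemainder h (w % a) (w % b) : ℕ) ≡ w [MOD b] :=
      hcrt.2.trans (Nat.mod_modEq w b)
    have h4 : (Nat.chineseRemainder h (w % a) (w % b) : ℕ) % (a * b) ≡ w [MOD a * b] :=
      (Nat.mod_modEq _ _).trans ((Nat.modEq_and_modEq_iff_modEq_mul h).mp ⟨h1, h2⟩)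
    unfold Nat.ModEq at h4
    rwa [Nat.mod_mod_of_dvd _ dvd_rfl, Nat.mod_eq_of_lt hw] at h4
  · intro uv huv
    simp only [Finset.mem_product, Finset.mem_range] at huv
    have hcrt := (Nat.chineseRemainder h uv.1 uv.2).2
    have h1 : (Nat.chineseRemainder h uv.1 uv.2 : ℕ) % (a * b) ≡ uv.1 [MOD a] :=
      ((Nat.mod_modEq _ (a*b)).of_dvd (dvd_mul_right a b)).trans hcrt.1
    have h2 : (Nat.chineseRemainder h uv.1 uv.2 : ℕ) % (a * b) ≡ uv.2 [MOD b] :=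
      ((Nat.mod_modEq _ (a*b)).of_dvd (dvd_mul_left b a)).trans hcrt.2
    unfold Nat.ModEq at h1 h2
    ext
    · show _ % (a*b) % a = uv.1
      rw [h1, Nat.mod_eq_of_lt huv.1]
    · show _ % (a*b) % b = uv.2
      rw [h2, Nat.mod_eq_of_lt huv.2]
  · intro w hw
    rfl

lemma Fd_one (n m : ℤ) : Fd n m 1 0 = 1 := by
  unfold Fd
  rw [if_pos]
  · norm_num
  · refine ⟨Nat.coprime_one_right 0, ?_, ?_⟩
    · simp [Nat.primeFactors_one]
    · simp [Int.gcd]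

lemma Fd_sum_split (n m : ℤ) (d : ℕ) (hsq : Squarefree d) :
    ∑ w ∈ range d, Fd n m d w = ∏ p ∈ d.primeFactors, ∑ w ∈ range p, Fd n m p w := by
  induction d using Nat.strong_induction_on with
  | _ d IH =>
    rcases eq_or_lt_of_le (Nat.one_le_iff_ne_zero.mpr hsq.ne_zero) with h1 | h1
    · rw [← h1]
      simp [Nat.primeFactors_one, Fd_one n m]
    · set p := d.minFac with hp_def
      have hp : p.Prime := Nat.minFac_prime (by omega)
      set k := d / p with hk_def
      have hdpk : d = p * k := (Nat.mul_div_cancel' d.minFac_dvd).symm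
      have hk0 : 0 < k := by
        rcases Nat.eq_zero_or_pos k with h | h
        · rw [h, mul_zero] at hdpk; omega
        · exact h
      have hpk : ¬ p ∣ k := by
        intro hdvd
        obtain ⟨t, ht⟩ := hdvd
        have : p * p ∣ d := ⟨t, by rw [hdpk, ht]; ring⟩
        exact hp.one_lt.ne' (Nat.isUnit_iff.mp (hsq p this))
      have hcop : Nat.Coprime p k := (Nat.Prime.coprime_iff_not_dvd hp).mpr hpk
      have hksq : Squarefree k := hsq.squarefree_of_dvd ⟨p, by rw [hdpk]; ring⟩
      have hklt : k < d := Nat.div_lt_self (by omega) hp.one_lt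
      have hIH := IH k hklt hksq
      have hpf : d.primeFactors = insert p k.primeFactors := by
        rw [hdpk, Nat.primeFactors_mul hp.pos.ne' hk0.ne', Nat.Prime.primeFactors hp,
          Finset.insert_eq]
      have hpnotmem : p ∉ k.primeFactors := fun h => hpk (Nat.dvd_of_mem_primeFactors h)
      calc ∑ w ∈ range d, Fd n m d w
          = ∑ w ∈ range (p * k), Fd n m p (w % p) * Fd n m k (w % k) := by
            rw [← hdpk]
            refine Finset.sum_congr rfl fun w _ => ?_
            rw [Fd_mod n m p, Fd_mod n m k, hdpk, Fd_mul n m hp.pos hk0 hcop]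
        _ = (∑ u ∈ range p, Fd n m p u) * (∑ v ∈ range k, Fd n m k v) :=
            sum_crt' hp.pos hk0 hcop _ _
        _ = ∏ q ∈ d.primeFactors, ∑ w ∈ range q, Fd n m q w := by
            rw [hIH, hpf, Finset.prod_insert hpnotmem]


lemma int_gcd_prime_dvd {p : ℕ} (hp : p.Prime) {z : ℤ} (h : (p : ℤ) ∣ z) : Int.gcd z p = p := by
  unfold Int.gcd
  simp only [Int.natAbs_natCast]
  refine Nat.gcd_eq_right ?_
  rw [← Int.natCast_dvd_natCast]
  exact Int.dvd_natAbs.mpr h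

lemma int_gcd_prime_not_dvd {p : ℕ} (hp : p.Prime) {z : ℤ} (h : ¬ (p : ℤ) ∣ z) : Int.gcd z p = 1 := by
  unfold Int.gcd
  simp only [Int.natAbs_natCast]
  have : ¬ p ∣ z.natAbs := fun hc => h (Int.dvd_natAbs.mp (Int.natCast_dvd_natCast.mpr hc))
  exact Nat.Coprime.gcd_eq_one (Nat.Coprime.symm ((Nat.Prime.coprime_iff_not_dvd hp).mpr this))

lemma sum_range_eq_sum_zmod (p : ℕ) [NeZero p] (f : ℕ → ℚ) :
    ∑ w ∈ range p, f w = ∑ a : ZMod p, f (ZMod.val a) := by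
  refine Finset.sum_nbij' (fun w => (w : ZMod p)) ZMod.val (fun w _ => Finset.mem_univ _)
    (fun a _ => Finset.mem_range.mpr (ZMod.val_lt a)) ?_ ?_ ?_
  · intro w hw
    exact ZMod.val_cast_of_lt (Finset.mem_range.mp hw)
  · intro a _
    exact ZMod.natCast_rightInverse a
  · intro w hw
    rw [ZMod.val_cast_of_lt (Finset.mem_range.mp hw)]

lemma qr_count (p : ℕ) [hpf : Fact p.Prime] (hp2 : p ≠ 2) :
    ∑ a : ZMod p, (if quadraticChar (ZMod p) a = 1 then (1 : ℚ) else 0) = ((p : ℚ) - 1) / 2 := by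
  have hchar : ringChar (ZMod p) ≠ 2 := by rw [ZMod.ringChar_zmod_n]; exact hp2
  have hsum0 : ∑ a : ZMod p, (quadraticChar (ZMod p) a : ℚ) = 0 := by
    have := quadraticChar_sum_zero hchar
    calc ∑ a : ZMod p, (quadraticChar (ZMod p) a : ℚ)
        = ((∑ a : ZMod p, quadraticChar (ZMod p) a : ℤ) : ℚ) := by push_cast; rfl
      _ = 0 := by rw [this]; norm_num
  have hpoint : ∀ a : ZMod p, 2 * (if quadraticChar (ZMod p) a = 1 then (1 : ℚ) else 0)
      = (1 - if a = 0 then (1:ℚ) else 0) + (quadraticChar (ZMod p) a : ℚ) := by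
    intro a
    by_cases ha : a = 0
    · subst ha
      rw [if_pos rfl]
      simp [quadraticChar_zero]
    · rcases quadraticChar_dichotomy ha with h | h <;> rw [h] <;> simp [ha] <;> norm_num
  have h2 : 2 * ∑ a : ZMod p, (if quadraticChar (ZMod p) a = 1 then (1 : ℚ) else 0)
      = (p : ℚ) - 1 := by
    rw [Finset.mul_sum]
    rw [Finset.sum_congr rfl (fun a _ => hpoint a)]
    rw [Finset.sum_add_distrib, hsum0, add_zero, Finset.sum_sub_distrib]
    rw [Finset.sum_const, Finset.sum_ite_eq' Finset.univ (0 : ZMod p) (fun _ => (1:ℚ))]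
    simp [ZMod.card p]
  linarith

lemma mem_pf_self {p : ℕ} (hp : p.Prime) : p ∈ p.primeFactors := by
  rw [Nat.Prime.primeFactors hp]; exact Finset.mem_singleton_self p

lemma prime_eval (n m : ℤ) (p : ℕ) (hp : p.Prime) (hp2 : p ≠ 2) :
    2 * ∑ w ∈ range p, Fd n m p w =
      if (p:ℤ) ∣ m ∧ (p:ℤ) ∣ n then 0
      else if (p:ℤ) ∣ m * n then 1 + (jacobiSym n p : ℚ)
      else 1 - (1 + (jacobiSym n p : ℚ)) / ((p:ℚ) - 1) := by
  haveI : Fact p.Prime := ⟨hp⟩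
  haveI : NeZero p := ⟨hp.pos.ne'⟩
  have hp3 : 3 ≤ p := by
    have := hp.two_le
    omega
  have hpq : ((p:ℚ) - 1) ≠ 0 := by
    have : (3:ℚ) ≤ (p:ℚ) := by exact_mod_cast hp3
    linarith
  set nbar : ZMod p := (n : ZMod p) with hnbar
  rw [sum_range_eq_sum_zmod]
  have hvalcast : ∀ a : ZMod p, ((ZMod.val a : ℕ) : ZMod p) = a := fun a =>
    ZMod.natCast_rightInverse a
  have hjac : ∀ a : ZMod p, (jacobiSym (ZMod.val a : ℤ) p = 1) ↔
      quadraticChar (ZMod p) a = 1 := by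
    intro a
    rw [← jacobiSym.legendreSym.to_jacobiSym]
    unfold legendreSym
    rw [Int.cast_natCast, hvalcast a]
  have hcop : ∀ a : ZMod p, Nat.Coprime (ZMod.val a) p ↔ a ≠ 0 := by
    intro a
    rw [Nat.coprime_comm, hp.coprime_iff_not_dvd,
      ← ZMod.natCast_eq_zero_iff (ZMod.val a) p, hvalcast a]
  have hdvdsub : ∀ a : ZMod p, ((p:ℤ) ∣ n - (ZMod.val a : ℤ)) ↔ a = nbar := by
    intro a
    rw [← ZMod.intCast_zmod_eq_zero_iff_dvd, Int.cast_sub, Int.cast_natCast, hvalcast a,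
      sub_eq_zero, eq_comm]
  have hquad : quadraticChar (ZMod p) nbar = jacobiSym n p := by
    rw [← jacobiSym.legendreSym.to_jacobiSym]
    rfl
  have hchi_ne : quadraticChar (ZMod p) (0 : ZMod p) ≠ 1 := by
    rw [quadraticChar_zero]; norm_num
  by_cases hm : (p:ℤ) ∣ m
  · have hgm : Int.gcd m p = p := int_gcd_prime_dvd hp hm
    have hsummand : ∀ a : ZMod p, Fd n m p (ZMod.val a)
        = if a = nbar ∧ quadraticChar (ZMod p) a = 1 then 1 else 0 := by
      intro a
      unfold Fd
      by_cases hc : a = nbar ∧ quadraticChar (ZMod p) a = 1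
      · obtain ⟨h1, h2⟩ := hc
        have hdvd : (p:ℤ) ∣ n - (ZMod.val a : ℤ) := (hdvdsub a).mpr h1
        have hgcd : Int.gcd (n - (ZMod.val a : ℤ)) p = p := int_gcd_prime_dvd hp hdvd
        rw [if_pos, if_pos ⟨h1, h2⟩]
        · rw [hgcd, Nat.div_self hp.pos, Nat.totient_one]; norm_num
        · refine ⟨(hcop a).mpr ?_, ?_, hgcd.trans hgm.symm⟩
          · intro h0; rw [h0] at h2; exact hchi_ne h2
          · intro q hq
            rw [Nat.Prime.primeFactors hp, Finset.mem_singleton] at hq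
            subst hq
            exact (hjac a).mpr h2
      · rw [if_neg, if_neg hc]
        rintro ⟨c1, c2, c3⟩
        rw [hgm] at c3
        have hdvd : (p:ℤ) ∣ n - (ZMod.val a : ℤ) := by
          have h := Int.gcd_dvd_left (a := n - (ZMod.val a : ℤ)) (b := (p:ℤ))
          rwa [c3] at h
        exact hc ⟨(hdvdsub a).mp hdvd, (hjac a).mp (c2 p (mem_pf_self hp))⟩
    rw [Finset.sum_congr rfl (fun a _ => hsummand a)]
    have hsum1 : ∑ a : ZMod p, (if a = nbar ∧ quadraticChar (ZMod p) a = 1 then (1:ℚ) else 0)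
        = if quadraticChar (ZMod p) nbar = 1 then 1 else 0 := by
      have hpt : ∀ a : ZMod p, (if a = nbar ∧ quadraticChar (ZMod p) a = 1 then (1:ℚ) else 0)
          = if a = nbar then (if quadraticChar (ZMod p) nbar = 1 then (1:ℚ) else 0) else 0 := by
        intro a
        by_cases ha : a = nbar
        · subst ha; simp
        · simp [ha]
      rw [Finset.sum_congr rfl (fun a _ => hpt a),
        Finset.sum_ite_eq' Finset.univ nbar (fun _ => _), if_pos (Finset.mem_univ nbar)]
    rw [hsum1]
    by_cases hn : (p:ℤ) ∣ n
    · have h0 : nbar = 0 := by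
        rw [hnbar, ZMod.intCast_zmod_eq_zero_iff_dvd]; exact hn
      rw [h0, if_neg hchi_ne, if_pos (show ((p:ℤ) ∣ m ∧ (p:ℤ) ∣ n) from ⟨hm, hn⟩)]
      norm_num
    · have hgn : Int.gcd n p = 1 := int_gcd_prime_not_dvd hp hn
      rcases jacobiSym.eq_one_or_neg_one hgn with h | h
      · rw [if_pos (hquad.trans h), if_neg (fun hand => hn hand.2),
          if_pos (dvd_mul_of_dvd_left hm n), h]
        norm_num
      · rw [if_neg (show ¬ quadraticChar (ZMod p) nbar = 1 by rw [hquad, h]; norm_num),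
          if_neg (fun hand => hn hand.2), if_pos (dvd_mul_of_dvd_left hm n), h]
        norm_num
  · have hgm : Int.gcd m p = 1 := int_gcd_prime_not_dvd hp hm
    set c : ℚ := 1 / ((p:ℚ) - 1) with hc_def
    have hsummand : ∀ a : ZMod p, Fd n m p (ZMod.val a)
        = if quadraticChar (ZMod p) a = 1 ∧ a ≠ nbar then c else 0 := by
      intro a
      unfold Fd
      by_cases hcnd : quadraticChar (ZMod p) a = 1 ∧ a ≠ nbar
      · obtain ⟨h2, h1⟩ := hcnd
        have hnd : ¬ (p:ℤ) ∣ n - (ZMod.val a : ℤ) := fun h => h1 ((hdvdsub a).mp h)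
        have hgcd : Int.gcd (n - (ZMod.val a : ℤ)) p = 1 := int_gcd_prime_not_dvd hp hnd
        rw [if_pos, if_pos ⟨h2, h1⟩]
        · rw [hgcd, Nat.div_one, Nat.totient_prime hp, hc_def, Nat.cast_pred hp.pos]
        · refine ⟨(hcop a).mpr ?_, ?_, hgcd.trans hgm.symm⟩
          · intro h0; rw [h0] at h2; exact hchi_ne h2
          · intro q hq
            rw [Nat.Prime.primeFactors hp, Finset.mem_singleton] at hq
            subst hq
            exact (hjac a).mpr h2
      · rw [if_neg, if_neg hcnd]
        rintro ⟨c1, c2, c3⟩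
        rw [hgm] at c3
        have hnd : ¬ (p:ℤ) ∣ n - (ZMod.val a : ℤ) := by
          intro h
          have := int_gcd_prime_dvd hp h
          rw [c3] at this
          exact hp.one_lt.ne this
        exact hcnd ⟨(hjac a).mp (c2 p (mem_pf_self hp)), fun h => hnd ((hdvdsub a).mpr h)⟩
    rw [Finset.sum_congr rfl (fun a _ => hsummand a)]
    have hpt : ∀ a : ZMod p, (if quadraticChar (ZMod p) a = 1 ∧ a ≠ nbar then c else 0)
        = (if quadraticChar (ZMod p) a = 1 then c else 0)
          - (if a = nbar then (if quadraticChar (ZMod p) nbar = 1 then c else 0) else 0) := by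
      intro a
      by_cases ha : a = nbar
      · subst ha; simp
      · simp [ha]
    rw [Finset.sum_congr rfl (fun a _ => hpt a), Finset.sum_sub_distrib]
    have hsumA : ∑ a : ZMod p, (if quadraticChar (ZMod p) a = 1 then c else 0)
        = c * (((p:ℚ) - 1) / 2) := by
      have : ∀ a : ZMod p, (if quadraticChar (ZMod p) a = 1 then c else 0)
          = c * (if quadraticChar (ZMod p) a = 1 then (1:ℚ) else 0) := by
        intro a; by_cases h : quadraticChar (ZMod p) a = 1 <;> simp [h]
      rw [Finset.sum_congr rfl (fun a _ => this a), ← Finset.mul_sum, qr_count p hp2]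
    have hsumB : ∑ a : ZMod p, (if a = nbar then (if quadraticChar (ZMod p) nbar = 1 then c else 0) else 0)
        = (if quadraticChar (ZMod p) nbar = 1 then c else 0) := by
      rw [Finset.sum_ite_eq' Finset.univ nbar (fun _ => _), if_pos (Finset.mem_univ nbar)]
    rw [hsumA, hsumB]
    by_cases hn : (p:ℤ) ∣ n
    · have h0 : nbar = 0 := by
        rw [hnbar, ZMod.intCast_zmod_eq_zero_iff_dvd]; exact hn
      have hJ : jacobiSym n p = 0 := by
        apply jacobiSym.eq_zero_iff_not_coprime.mpr
        rw [int_gcd_prime_dvd hp hn]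
        exact hp.one_lt.ne'
      rw [h0, if_neg hchi_ne, if_neg (fun hand => hm hand.1),
        if_pos (dvd_mul_of_dvd_right hn m), hJ, hc_def]
      push_cast
      field_simp
      norm_num
    · have hpz : Prime ((p:ℕ) : ℤ) := Nat.prime_iff_prime_int.mp hp
      have hmn : ¬ (p:ℤ) ∣ m * n := fun h => ((hpz.2.2 m n h).elim hm hn)
      have hgn : Int.gcd n p = 1 := int_gcd_prime_not_dvd hp hn
      rcases jacobiSym.eq_one_or_neg_one hgn with h | h
      · rw [if_pos (hquad.trans h), if_neg (fun hand => hm hand.1), if_neg hmn, h, hc_def]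
        push_cast
        field_simp
        ring
      · rw [if_neg (show ¬ quadraticChar (ZMod p) nbar = 1 by rw [hquad, h]; norm_num),
          if_neg (fun hand => hm hand.1), if_neg hmn, h, hc_def]
        push_cast
        field_simp
        norm_num

lemma rhs_prod (n m : ℤ) (d : ℕ) (hd : 0 < d) :
    (if Nat.gcd d (Int.gcd m n) = 1 then (1 : ℚ) else 0) *
      (∏ p ∈ d.primeFactors.filter (fun p : ℕ => (p : ℤ) ∣ m * n),
        (1 + (jacobiSym n p : ℚ))) *
      (∏ p ∈ d.primeFactors.filter (fun p : ℕ => ¬ (p : ℤ) ∣ m * n),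
        (1 - (1 + (jacobiSym n p : ℚ)) / ((p : ℚ) - 1)))
    = ∏ p ∈ d.primeFactors, (if (p:ℤ) ∣ m ∧ (p:ℤ) ∣ n then 0
        else if (p:ℤ) ∣ m * n then 1 + (jacobiSym n p : ℚ)
        else 1 - (1 + (jacobiSym n p : ℚ)) / ((p:ℚ) - 1)) := by
  by_cases hcop : Nat.gcd d (Int.gcd m n) = 1
  · rw [if_pos hcop, one_mul]
    have hnot : ∀ p ∈ d.primeFactors, ¬ ((p:ℤ) ∣ m ∧ (p:ℤ) ∣ n) := by
      rintro p hp ⟨h1, h2⟩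
      have hpp : p.Prime := Nat.prime_of_mem_primeFactors hp
      have hpd : p ∣ d := Nat.dvd_of_mem_primeFactors hp
      have hpg : p ∣ Int.gcd m n := Int.natCast_dvd_natCast.mp (Int.dvd_coe_gcd h1 h2)
      have : p ∣ Nat.gcd d (Int.gcd m n) := Nat.dvd_gcd hpd hpg
      rw [hcop] at this
      exact hpp.one_lt.ne' (Nat.dvd_one.mp this)
    rw [Finset.prod_congr rfl (fun p hp => if_neg (hnot p hp))]
    rw [Finset.prod_ite]
  · rw [if_neg hcop, zero_mul, zero_mul]
    have hg0 : 0 < Nat.gcd d (Int.gcd m n) := Nat.gcd_pos_of_pos_left _ hd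
    set q := (Nat.gcd d (Int.gcd m n)).minFac with hq_def
    have hq : q.Prime := Nat.minFac_prime (by omega)
    have hqd : q ∣ d := (Nat.minFac_dvd _).trans (Nat.gcd_dvd_left _ _)
    have hqg : q ∣ Int.gcd m n := (Nat.minFac_dvd _).trans (Nat.gcd_dvd_right _ _)
    have hqm : (q:ℤ) ∣ m := (Int.natCast_dvd_natCast.mpr hqg).trans (Int.gcd_dvd_left _ _)
    have hqn : (q:ℤ) ∣ n := (Int.natCast_dvd_natCast.mpr hqg).trans (Int.gcd_dvd_right _ _)
    have hqmem : q ∈ d.primeFactors := Nat.mem_primeFactors.mpr ⟨hq, hqd, hd.ne'⟩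
    refine (Finset.prod_eq_zero hqmem ?_).symm
    rw [if_pos (show ((q:ℤ) ∣ m ∧ (q:ℤ) ∣ n) from ⟨hqm, hqn⟩)]


/-- Evaluation of the `w`-sum: for `d'` odd squarefree and integers `n, m`,
`∏_{p ∣ d'} 2 · ∑_{w mod d', (w,d')=1, (w/p)=1 ∀ p∣d', (n-w,d')=(m,d')} 1/φ(d'/(n-w,d'))`
equals
`𝟙_{(d',m,n)=1} ∏_{p∣d', p∣mn}(1+χ_{p*}(n)) ∏_{p∣d', p∤mn}(1-(1+χ_{p*}(n))/(p-1))`. -/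
theorem stmt9 (d' : ℕ) (hd : 0 < d') (hsq : Squarefree d') (hodd : Odd d') (n m : ℤ) :
    (∏ p ∈ d'.primeFactors, (2 : ℚ)) *
      ∑ w ∈ Finset.range d',
        (if Nat.Coprime w d' ∧ (∀ p ∈ d'.primeFactors, jacobiSym (w : ℤ) p = 1) ∧
            Int.gcd (n - (w : ℤ)) d' = Int.gcd m d'
          then (1 : ℚ) / (Nat.totient (d' / Int.gcd (n - (w : ℤ)) d') : ℚ) else 0)
      = (if Nat.gcd d' (Int.gcd m n) = 1 then (1 : ℚ) else 0) *
          (∏ p ∈ d'.primeFactors.filter (fun p : ℕ => (p : ℤ) ∣ m * n),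
            (1 + (jacobiSym n p : ℚ))) *
          (∏ p ∈ d'.primeFactors.filter (fun p : ℕ => ¬ (p : ℤ) ∣ m * n),
            (1 - (1 + (jacobiSym n p : ℚ)) / ((p : ℚ) - 1))) := by
  have hstep : ∑ w ∈ Finset.range d',
        (if Nat.Coprime w d' ∧ (∀ p ∈ d'.primeFactors, jacobiSym (w : ℤ) p = 1) ∧
            Int.gcd (n - (w : ℤ)) d' = Int.gcd m d'
          then (1 : ℚ) / (Nat.totient (d' / Int.gcd (n - (w : ℤ)) d') : ℚ) else 0)
      = ∑ w ∈ Finset.range d', Fd n m d' w := by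
    refine Finset.sum_congr rfl fun w _ => ?_
    unfold Fd
    rfl
  rw [hstep, Fd_sum_split n m d' hsq, ← Finset.prod_mul_distrib]
  rw [rhs_prod n m d' hd]
  refine Finset.prod_congr rfl fun p hp => ?_
  have hpp : p.Prime := Nat.prime_of_mem_primeFactors hp
  have hp2 : p ≠ 2 := by
    intro h2
    have : (2 : ℕ) ∣ d' := h2 ▸ Nat.dvd_of_mem_primeFactors hp
    rw [Nat.odd_iff] at hodd
    omega
  exact prime_eval n m p hpp hp2
end

section
/- Let $p$ be an odd prime, $m$ a positive integer whose odd part is squarefree, and $n$ a positive integer. Then $\sum_{a_d \mid p^\infty,\ (n, a_d p^2) = (m, a_d p^2)} \frac{\chi_{-4}(a_d)}{\phi(a_d p^2 / (n, a_d p^2))}$ equals $\frac{1}{(p-1)(p - \chi_{-4}(p))}$ if $p \nmid mn$, equals $\frac{p}{(p-1)(p - \chi_{-4}(p))}$ if $p \| m$ and $p \| n$, and equals $0$ otherwise. -/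
/-- The nontrivial Dirichlet character modulo 4. -/
def chi4 (d : ℕ) : ℤ := if d % 4 = 1 then 1 else if d % 4 = 3 then -1 else 0

private lemma three_pow_mod (k : ℕ) : 3 ^ k % 4 = if k % 2 = 0 then 1 else 3 := by
  induction k with
  | zero => simp
  | succ k ih =>
    rw [pow_succ, Nat.mul_mod, ih]
    split_ifs <;> omega

private lemma chi4_pow {p : ℕ} (hp : p % 2 = 1) (k : ℕ) : chi4 (p ^ k) = chi4 p ^ k := by
  have h4 : p % 4 = 1 ∨ p % 4 = 3 := by omega
  have hm : p ^ k % 4 = (p % 4) ^ k % 4 := Nat.pow_mod p k 4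
  rcases h4 with h | h
  · rw [h, one_pow] at hm
    simp [chi4, hm, h]
  · rw [h, three_pow_mod] at hm
    have hcp : chi4 p = -1 := by simp [chi4, h]
    rcases Nat.even_or_odd k with he | he
    · have hk := Nat.even_iff.mp he
      rw [hk, if_pos rfl] at hm
      rw [hcp, he.neg_one_pow]
      simp [chi4, hm]
    · have hk := Nat.odd_iff.mp he
      rw [hk] at hm
      simp only [one_ne_zero, if_false] at hm
      rw [hcp, he.neg_one_pow]
      simp [chi4, hm]

private lemma gcd_prime_pow {p : ℕ} (hp : p.Prime) (n a : ℕ) (hn : n ≠ 0) :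
    Nat.gcd n (p ^ a) = p ^ min (n.factorization p) a := by
  obtain ⟨i, hi, hgcd⟩ := (Nat.dvd_prime_pow hp).mp (Nat.gcd_dvd_right n (p ^ a))
  have h1 : (Nat.gcd n (p ^ a)).factorization p = i := by
    rw [hgcd, hp.factorization_pow, Finsupp.single_eq_same]
  rw [Nat.factorization_gcd hn (pow_ne_zero a hp.ne_zero)] at h1
  simp only [Finsupp.inf_apply, hp.factorization_pow, Finsupp.single_eq_same] at h1
  rw [hgcd, ← h1]

/-- For an odd prime `p`, a positive integer `m` with squarefree odd part, and a positive
integer `n`, the sum `∑_{a_d ∣ p^∞, (n, a_d p²)=(m, a_d p²)} χ₋₄(a_d)/φ(a_d p²/(n, a_d p²))`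
equals `1/((p-1)(p-χ₋₄(p)))` if `p ∤ mn`, equals `p/((p-1)(p-χ₋₄(p)))` if `p ∥ m` and
`p ∥ n`, and equals `0` otherwise. -/
theorem stmt10 (p : ℕ) (hp : p.Prime) (hp2 : p ≠ 2) (m n : ℕ) (hm : 0 < m) (hn : 0 < n)
    (hmsq : Squarefree (m / 2 ^ (m.factorization 2))) :
    ∑' k : ℕ,
        (if Nat.gcd n (p ^ k * p ^ 2) = Nat.gcd m (p ^ k * p ^ 2)
          then (chi4 (p ^ k) : ℝ) /
            (Nat.totient (p ^ k * p ^ 2 / Nat.gcd n (p ^ k * p ^ 2)) : ℝ)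
          else 0)
      = if ¬ p ∣ m * n then 1 / (((p : ℝ) - 1) * ((p : ℝ) - (chi4 p : ℝ)))
        else if p ∣ m ∧ ¬ p ^ 2 ∣ m ∧ p ∣ n ∧ ¬ p ^ 2 ∣ n
          then (p : ℝ) / (((p : ℝ) - 1) * ((p : ℝ) - (chi4 p : ℝ)))
        else 0 := by
  have hm0 : m ≠ 0 := hm.ne'
  have hn0 : n ≠ 0 := hn.ne'
  have hp3 : 3 ≤ p := by
    have := hp.two_le; omega
  have hpodd : p % 2 = 1 := by
    rcases Nat.even_or_odd p with he | ho
    · exact absurd ((Nat.Prime.even_iff hp).mp he) hp2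
    · exact Nat.odd_iff.mp ho
  have hp0 : (p : ℝ) ≠ 0 := by positivity
  have hp1 : (p : ℝ) - 1 ≠ 0 := by
    have : (3 : ℝ) ≤ (p : ℝ) := by exact_mod_cast hp3
    nlinarith
  have hε : (chi4 p : ℝ) = 1 ∨ (chi4 p : ℝ) = -1 := by
    have h4 : p % 4 = 1 ∨ p % 4 = 3 := by omega
    rcases h4 with h | h
    · left; simp [chi4, h]
    · right; simp [chi4, h]
  have hεabs : |(chi4 p : ℝ)| = 1 := by rcases hε with h | h <;> rw [h] <;> norm_num
  have hpε : (p : ℝ) - (chi4 p : ℝ) ≠ 0 := by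
    have h3 : (3 : ℝ) ≤ (p : ℝ) := by exact_mod_cast hp3
    rcases hε with h | h <;> rw [h] <;> nlinarith
  set v := m.factorization p with hvdef
  set w := n.factorization p with hwdef
  have hv1 : v ≤ 1 := by
    have h1 := hmsq.natFactorization_le_one p
    have h2 : (m / 2 ^ (m.factorization 2)).factorization p = m.factorization p := by
      rw [Nat.factorization_ordCompl m 2]
      exact Finsupp.erase_ne (by omega : p ≠ 2)
    rw [h2] at h1
    exact h1
  have hdm : p ∣ m ↔ 1 ≤ v := hp.dvd_iff_one_le_factorization hm0
  have hdn : p ∣ n ↔ 1 ≤ w := hp.dvd_iff_one_le_factorization hn0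
  have hdm2 : p ^ 2 ∣ m ↔ 2 ≤ v := hp.pow_dvd_iff_le_factorization hm0
  have hdn2 : p ^ 2 ∣ n ↔ 2 ≤ w := hp.pow_dvd_iff_le_factorization hn0
  have hgcdn : ∀ k : ℕ, Nat.gcd n (p ^ k * p ^ 2) = p ^ min w (k + 2) := by
    intro k; rw [← pow_add]; exact gcd_prime_pow hp n (k + 2) hn0
  have hgcdm : ∀ k : ℕ, Nat.gcd m (p ^ k * p ^ 2) = p ^ min v (k + 2) := by
    intro k; rw [← pow_add]; exact gcd_prime_pow hp m (k + 2) hm0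
  have hcond : ∀ k : ℕ, (Nat.gcd n (p ^ k * p ^ 2) = Nat.gcd m (p ^ k * p ^ 2)) ↔ w = v := by
    intro k
    rw [hgcdn, hgcdm]
    constructor
    · intro h
      have := Nat.pow_right_injective hp.two_le h
      omega
    · intro h; rw [h]
  by_cases hwv : w = v
  · -- condition always true
    have hterm : ∀ k : ℕ,
        (if Nat.gcd n (p ^ k * p ^ 2) = Nat.gcd m (p ^ k * p ^ 2)
          then (chi4 (p ^ k) : ℝ) /
            (Nat.totient (p ^ k * p ^ 2 / Nat.gcd n (p ^ k * p ^ 2)) : ℝ)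
          else 0)
        = (chi4 (p ^ k) : ℝ) / (Nat.totient (p ^ (k + 2 - v)) : ℝ) := by
      intro k
      rw [if_pos ((hcond k).mpr hwv), hgcdn k, hwv,
        min_eq_left (by omega : v ≤ k + 2), ← pow_add,
        Nat.pow_div (by omega) hp.pos]
    rw [tsum_congr hterm]
    have hnorm : ‖(chi4 p : ℝ) / (p : ℝ)‖ < 1 := by
      rw [Real.norm_eq_abs, abs_div, hεabs, abs_of_pos (by positivity : (0:ℝ) < (p:ℝ))]
      rw [div_lt_one (by positivity)]
      exact_mod_cast by omega
    have hsub : (1 : ℝ) - (chi4 p : ℝ) / (p : ℝ) ≠ 0 := by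
      intro h
      have : (chi4 p : ℝ) / (p : ℝ) = 1 := by linarith [sub_eq_zero.mp h]
      rw [this] at hnorm; simp at hnorm
    have hkey : ∀ c : ℕ, c = 1 - v → ∀ k : ℕ,
        (chi4 (p ^ k) : ℝ) / (Nat.totient (p ^ (k + 2 - v)) : ℝ)
        = ((chi4 p : ℝ) / (p : ℝ)) ^ k * (1 / ((p : ℝ) ^ c * ((p : ℝ) - 1))) := by
      intro c hc k
      have he : k + 2 - v = (k + c) + 1 := by omega
      rw [he, Nat.totient_prime_pow hp (Nat.succ_pos _), chi4_pow hpodd]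
      push_cast [hp.one_le]
      rw [div_pow]
      field_simp
      try ring
      all_goals exact Or.inl trivial
    rcases (by omega : v = 0 ∨ v = 1) with hv0 | hv0
    · -- p divides neither m nor n
      have hwval : w = 0 := by omega
      rw [if_pos (by
        rw [hp.dvd_mul, hdm, hdn]; omega)]
      rw [tsum_congr (hkey 1 (by omega)), tsum_mul_right,
        tsum_geometric_of_norm_lt_one hnorm]
      field_simp
      try ring
      all_goals exact Or.inl trivial
    · have hwval : w = 1 := by omega
      rw [if_neg (by
        rw [Classical.not_not, hp.dvd_mul, hdm]; omega),
        if_pos (by rw [hdm, hdm2, hdn, hdn2]; omega)]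
      rw [tsum_congr (hkey 0 (by omega)), tsum_mul_right,
        tsum_geometric_of_norm_lt_one hnorm]
      field_simp
      try ring
      all_goals exact Or.inl trivial
  · -- condition always false
    have hterm : ∀ k : ℕ,
        (if Nat.gcd n (p ^ k * p ^ 2) = Nat.gcd m (p ^ k * p ^ 2)
          then (chi4 (p ^ k) : ℝ) /
            (Nat.totient (p ^ k * p ^ 2 / Nat.gcd n (p ^ k * p ^ 2)) : ℝ)
          else 0) = 0 := by
      intro k
      exact if_neg (fun h => hwv ((hcond k).mp h))
    rw [tsum_congr hterm, tsum_zero]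
    rw [if_neg (by rw [Classical.not_not, hp.dvd_mul, hdm, hdn]; omega),
      if_neg (by rw [hdm, hdm2, hdn, hdn2]; omega)]
end
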